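/- Let (X_T, Y_T) and (X, Y) be t-structures on a triangulated category D with Y_T ⊆ Y ⊆ Y_T[1], let H_T be the heart of (X_T, Y_T), and let F = H_T ∩ Y. Suppose (T, F) is a torsion pair in H_T. Then Y equals the extension closure ⟨Y_T, F⟩; in particular, setting Y_1 = Y_T[1] ∩ Y and X_1 = ^⊥Y_1, the pair (X_1, Y_1) is a t-structure on D obtained as the HRS-tilt of (X_T, Y_T) at (T, F). -/
import Mathlib


open CategoryTheory Category Limits Pretriangulated

set_option linter.unusedSectionVars false
namespace Paper

variable {C : Type*} [Category C] [HasZeroObject C] [Preadditive C] [HasShift C ℤ]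
  [∀ n : ℤ, (shiftFunctor C n).Additive] [Pretriangulated C]

/-- The shift of a class of objects: `S⟦n⟧` (closed under isomorphism). -/
def shiftSet (S : Set C) (n : ℤ) : Set C := {X | ∃ A ∈ S, Nonempty (X ≅ A⟦n⟧)}

/-- `S[≤ n] = { S⟦i⟧ ∣ S ∈ S, i ≤ n }`. -/
def shiftsLe (S : Set C) (n : ℤ) : Set C := {X | ∃ A ∈ S, ∃ i : ℤ, i ≤ n ∧ Nonempty (X ≅ A⟦i⟧)}

/-- `S[≥ n] = { S⟦i⟧ ∣ S ∈ S, i ≥ n }`. -/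
def shiftsGe (S : Set C) (n : ℤ) : Set C := {X | ∃ A ∈ S, ∃ i : ℤ, n ≤ i ∧ Nonempty (X ≅ A⟦i⟧)}

/-- `X * Y`: objects `D` fitting in a distinguished triangle `X → D → Y → X⟦1⟧`. -/
def star (X Y : Set C) : Set C :=
  {D | ∃ (A B : C) (f : A ⟶ D) (g : D ⟶ B) (h : B ⟶ A⟦(1 : ℤ)⟧),
    A ∈ X ∧ B ∈ Y ∧ Triangle.mk f g h ∈ distTriang C}

/-- Right perpendicular class. -/
def rightPerp (S : Set C) : Set C := {D | ∀ A ∈ S, ∀ f : A ⟶ D, f = 0}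

/-- Left perpendicular class. -/
def leftPerp (S : Set C) : Set C := {D | ∀ B ∈ S, ∀ f : D ⟶ B, f = 0}

/-- A t-structure `(X, Y)` on a (pre)triangulated category. -/
structure IsTStructure (X Y : Set C) : Prop where
  rp : rightPerp X = Y
  lp : leftPerp Y = X
  dec : ∀ D : C, D ∈ star X Y
  shift : shiftSet X 1 ⊆ X

/-- The heart `H = X ∩ Y⟦1⟧` of a t-structure. -/
def heart (X Y : Set C) : Set C := X ∩ shiftSet Y 1

/-- The extension closure of a class of objects. -/
inductive ExtClosure (S : Set C) : C → Prop
  | of {A : C} (h : A ∈ S) : ExtClosure S A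
  | iso {A B : C} (e : A ≅ B) (h : ExtClosure S A) : ExtClosure S B
  | ext {A E B : C} (f : A ⟶ E) (g : E ⟶ B) (h : B ⟶ A⟦(1 : ℤ)⟧)
      (hT : Triangle.mk f g h ∈ distTriang C)
      (hA : ExtClosure S A) (hB : ExtClosure S B) : ExtClosure S E

/-- The extension closure, as a set. -/
def extClosure (S : Set C) : Set C := {X | ExtClosure S X}

/-- A torsion pair `(T, F)` in the heart of a t-structure `(X, Y)`; short exact sequences in
the heart correspond to distinguished triangles with three terms in the heart. -/
structure IsHeartTorsionPair (X Y T F : Set C) : Prop where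
  subT : T ⊆ heart X Y
  subF : F ⊆ heart X Y
  rp : heart X Y ∩ rightPerp T = F
  lp : heart X Y ∩ leftPerp F = T
  dec : ∀ H₀ ∈ heart X Y, H₀ ∈ star T F

/-- A bounded t-structure. -/
def IsBounded (X Y : Set C) : Prop :=
  (∀ D : C, ∃ n : ℤ, D ∈ shiftSet X n) ∧ (∀ D : C, ∃ n : ℤ, D ∈ shiftSet Y n)

/-- A simple object of the heart of a t-structure: a nonzero object admitting no proper
subobjects in the heart (expressed via distinguished triangles with entries in the heart). -/
def IsSimpleInHeart (X Y : Set C) (A : C) : Prop :=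
  A ∈ heart X Y ∧ ¬ IsZero A ∧
  ∀ (A' B : C) (f : A' ⟶ A) (g : A ⟶ B) (h : B ⟶ A'⟦(1 : ℤ)⟧),
    Triangle.mk f g h ∈ (distTriang C) → A' ∈ heart X Y → B ∈ heart X Y →
    IsZero A' ∨ IsZero B

/-- An algebraic t-structure: a bounded t-structure whose heart is a length category with
finitely many simple objects, i.e. the heart is the extension closure of finitely many
simple objects. -/
def IsAlgebraic (X Y : Set C) : Prop :=
  IsTStructure X Y ∧ IsBounded X Y ∧
  ∃ (t : ℕ) (G : Fin t → C), (∀ i, IsSimpleInHeart X Y (G i)) ∧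
    heart X Y = extClosure (Set.range G)

/-- Thick closure: the smallest triangulated subcategory closed under direct summands. -/
inductive ThickClosure (S : Set C) : C → Prop
  | of {A : C} (h : A ∈ S) : ThickClosure S A
  | iso {A B : C} (e : A ≅ B) (h : ThickClosure S A) : ThickClosure S B
  | shift {A : C} (n : ℤ) (h : ThickClosure S A) : ThickClosure S (A⟦n⟧)
  | ext {A E B : C} (f : A ⟶ E) (g : E ⟶ B) (h : B ⟶ A⟦(1 : ℤ)⟧)
      (hT : Triangle.mk f g h ∈ distTriang C)
      (hA : ThickClosure S A) (hB : ThickClosure S B) : ThickClosure S E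
  | retract {A B : C} (s : A ⟶ B) (r : B ⟶ A) (hsr : s ≫ r = 𝟙 A)
      (h : ThickClosure S B) : ThickClosure S A

/-- Thick closure, as a set. -/
def thickClosure (S : Set C) : Set C := {X | ThickClosure S X}

/-- `Hom(S, T⟦i⟧) = 0` for all `i > 0`. -/
def vanishHomPos (S T : Set C) : Prop :=
  ∀ A ∈ S, ∀ B ∈ T, ∀ i : ℤ, 0 < i → ∀ f : A ⟶ B⟦i⟧, f = 0

/-- A silting subcategory `S` of the (thick) subcategory `P`. -/
def IsSiltingIn (P S : Set C) : Prop :=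
  S ⊆ P ∧ thickClosure S = P ∧ vanishHomPos S S

/-- The aisle `X_S = (S[≤ 0])^⊥` of the t-structure associated to a silting subcategory. -/
def siltXs (S : Set C) : Set C := rightPerp (shiftsLe S 0)

/-- The coaisle `Y_S = (S[≥ 0])^⊥` of the t-structure associated to a silting subcategory. -/
def siltYs (S : Set C) : Set C := rightPerp (shiftsGe S 0)

/-- A class of objects closed under isomorphisms, finite direct sums and direct summands. -/
def IsAddClosed [HasBinaryBiproducts C] (S : Set C) : Prop :=
  (∀ A B : C, (A ≅ B) → A ∈ S → B ∈ S) ∧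
  (∀ A B : C, A ∈ S → B ∈ S → (A ⊞ B) ∈ S) ∧
  (∀ A B : C, (∃ (s : A ⟶ B) (r : B ⟶ A), s ≫ r = 𝟙 A) → B ∈ S → A ∈ S)

/-- Silting-discreteness (relative to the subcategory `P` of compact objects, e.g.
`K^b(proj Λ)`): for every silting subcategory `S` of `P` there are only finitely many silting
subcategories `T` with `S ≥ T ≥ S⟦1⟧`. -/
def IsSiltingDiscrete [HasBinaryBiproducts C] (P : Set C) : Prop :=
  ∀ S : Set C, IsSiltingIn P S → IsAddClosed S →
    {T : Set C | IsSiltingIn P T ∧ IsAddClosed T ∧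
      vanishHomPos S T ∧ vanishHomPos T (shiftSet S 1)}.Finite

/-- A t-structure on a full (pre)triangulated subcategory `B` of the ambient category. -/
structure IsTStructureOn (B X Y : Set C) : Prop where
  subX : X ⊆ B
  subY : Y ⊆ B
  rp : B ∩ rightPerp X = Y
  lp : B ∩ leftPerp Y = X
  dec : ∀ D ∈ B, D ∈ star X Y
  shift : shiftSet X 1 ⊆ X

section Statement5Helpers

lemma rightPerp_iso' {S : Set C} {A B : C} (e : A ≅ B) (hA : A ∈ rightPerp S) :
    B ∈ rightPerp S := fun W hW f => by
  have : f = (f ≫ e.inv) ≫ e.hom := by simp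
  rw [this, hA W hW (f ≫ e.inv), zero_comp]

lemma leftPerp_iso' {S : Set C} {A B : C} (e : A ≅ B) (hA : A ∈ leftPerp S) :
    B ∈ leftPerp S := fun W hW f => by
  have : f = e.inv ≫ (e.hom ≫ f) := by simp
  rw [this, hA W hW (e.hom ≫ f), comp_zero]

lemma perp_obj₂ {W : Set C} {T : Triangle C} (hT : T ∈ distTriang C)
    (h₁ : T.obj₁ ∈ rightPerp W) (h₃ : T.obj₃ ∈ rightPerp W) : T.obj₂ ∈ rightPerp W := by
  intro S hS f
  obtain ⟨g, hg⟩ := Triangle.coyoneda_exact₂ T hT f (h₃ S hS _)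
  rw [hg, h₁ S hS g, zero_comp]

lemma perp_obj₁ {W : Set C} {T : Triangle C} (hT : T ∈ distTriang C)
    (h₂ : T.obj₂ ∈ rightPerp W) (h₃ : T.obj₃⟦(-1:ℤ)⟧ ∈ rightPerp W) :
    T.obj₁ ∈ rightPerp W :=
  perp_obj₂ (inv_rot_of_distTriang T hT) h₃ h₂

lemma lperp_obj₂ {W : Set C} {T : Triangle C} (hT : T ∈ distTriang C)
    (h₁ : T.obj₁ ∈ leftPerp W) (h₃ : T.obj₃ ∈ leftPerp W) : T.obj₂ ∈ leftPerp W := by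
  intro S hS f
  obtain ⟨g, hg⟩ := Triangle.yoneda_exact₂ T hT f (h₁ S hS _)
  rw [hg, h₃ S hS g, comp_zero]

lemma lperp_obj₃ {W : Set C} {T : Triangle C} (hT : T ∈ distTriang C)
    (h₂ : T.obj₂ ∈ leftPerp W) (h₁ : T.obj₁⟦(1:ℤ)⟧ ∈ leftPerp W) :
    T.obj₃ ∈ leftPerp W :=
  lperp_obj₂ (rot_of_distTriang T hT) h₂ h₁

omit [HasZeroObject C] [Pretriangulated C] in
lemma hom_shift_zero {S V₀ : C} (hz : ∀ k : S ⟶ V₀, k = 0) {V : C}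
    (e : V ≅ V₀⟦(1:ℤ)⟧) (g : S⟦(1:ℤ)⟧ ⟶ V) : g = 0 := by
  obtain ⟨k, hk⟩ := (shiftFunctor C (1:ℤ)).map_surjective (g ≫ e.hom)
  have h0 : g ≫ e.hom = 0 := by rw [← hk, hz k, Functor.map_zero]
  have : g = (g ≫ e.hom) ≫ e.inv := by simp
  rw [this, h0, zero_comp]

omit [HasZeroObject C] [Pretriangulated C] in
lemma hom_to_neg_shift_zero {S W : C} (hz : ∀ k : S⟦(1:ℤ)⟧ ⟶ W, k = 0)
    (f : S ⟶ W⟦(-1:ℤ)⟧) : f = 0 := by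
  apply (shiftFunctor C (1:ℤ)).map_injective
  rw [Functor.map_zero]
  have : f⟦(1:ℤ)⟧' = (f⟦(1:ℤ)⟧' ≫ (shiftFunctorCompIsoId C (-1) 1 (by norm_num)).hom.app W)
      ≫ (shiftFunctorCompIsoId C (-1) 1 (by norm_num)).inv.app W := by simp
  have h0 := hz (f⟦(1:ℤ)⟧' ≫ (shiftFunctorCompIsoId C (-1) 1 (by norm_num)).hom.app W)
  rw [this, h0, zero_comp]

omit [HasZeroObject C] [Pretriangulated C] in
lemma neg_shift_mem_rightPerp {XS : Set C} (hsh : shiftSet XS 1 ⊆ XS) {W : C}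
    (hW : W ∈ rightPerp XS) : (W⟦(-1:ℤ)⟧) ∈ rightPerp XS :=
  fun S hS f => hom_to_neg_shift_zero (fun k => hW _ (hsh ⟨S, hS, ⟨Iso.refl _⟩⟩) k) f

noncomputable def shift_neg_iso {D₀ D : C} (e : D ≅ D₀⟦(1:ℤ)⟧) : D⟦(-1:ℤ)⟧ ≅ D₀ :=
  (shiftFunctor C (-1:ℤ)).mapIso e ≪≫ (shiftFunctorCompIsoId C 1 (-1) (by norm_num)).app D₀

lemma extClosure_subset_rightPerp {W S : Set C} (h : S ⊆ rightPerp W) :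
    extClosure S ⊆ rightPerp W := by
  intro x hx
  induction hx with
  | of hA => exact h hA
  | iso e _ ih => exact rightPerp_iso' e ih
  | ext f g hh hT _ _ ihA ihB => exact perp_obj₂ hT ihA ihB

lemma extClosure_subset_leftPerp {W S : Set C} (h : S ⊆ leftPerp W) :
    extClosure S ⊆ leftPerp W := by
  intro x hx
  induction hx with
  | of hA => exact h hA
  | iso e _ ih => exact leftPerp_iso' e ih
  | ext f g hh hT _ _ ihA ihB => exact lperp_obj₂ hT ihA ihB

end Statement5Helpers

/-- Given t-structures `(X_T, Y_T)` and `(X, Y)` with `Y_T ⊆ Y ⊆ Y_T⟦1⟧`, if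
`(T, F)` with `F = H_T ∩ Y` is a torsion pair in the heart `H_T`, then
`Y = ⟨Y_T, F⟩`, and setting `Y₁ = Y_T⟦1⟧ ∩ Y`, `X₁ = ^⊥Y₁`, the pair `(X₁, Y₁)` is a
t-structure, namely the HRS-tilt `(⟨T, X_T⟦1⟧⟩, ⟨Y_T, F⟩)` of `(X_T, Y_T)` at `(T, F)`. -/

theorem statement5 (XT YT X Y T : Set C)
    (hTstr : IsTStructure XT YT) (h : IsTStructure X Y)
    (h1 : YT ⊆ Y) (h2 : Y ⊆ shiftSet YT 1)
    (htp : IsHeartTorsionPair XT YT T (heart XT YT ∩ Y)) :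
    Y = extClosure (YT ∪ (heart XT YT ∩ Y)) ∧
    IsTStructure (leftPerp (shiftSet YT 1 ∩ Y)) (shiftSet YT 1 ∩ Y) ∧
    leftPerp (shiftSet YT 1 ∩ Y) = extClosure (T ∪ shiftSet XT 1) ∧
    shiftSet YT 1 ∩ Y = extClosure (YT ∪ (heart XT YT ∩ Y)) := by
  have hY1 : shiftSet YT 1 ∩ Y = Y := Set.inter_eq_self_of_subset_right h2
  have hYrp : ∀ {V : C}, V ∈ Y → V ∈ rightPerp X := fun {V} hV => by rw [h.rp]; exact hV
  have hYTrp : ∀ {V : C}, V ∈ YT → V ∈ rightPerp XT := fun {V} hV => by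
    rw [hTstr.rp]; exact hV
  have hDneg : ∀ {D : C}, D ∈ Y → D⟦(-1:ℤ)⟧ ∈ rightPerp XT := by
    intro D hD
    obtain ⟨D₀, hD₀, ⟨e⟩⟩ := h2 hD
    exact rightPerp_iso' (shift_neg_iso e).symm (hYTrp hD₀)
  have key : ∀ D ∈ Y, D ∈ extClosure (YT ∪ (heart XT YT ∩ Y)) := by
    intro D hD
    obtain ⟨A, B, u, v, w, hA, hB, hdist⟩ := hTstr.dec D
    have hd1 := inv_rot_of_distTriang _ hdist
    have hd2 := inv_rot_of_distTriang _ hd1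
    have hd3 := inv_rot_of_distTriang _ hd2
    have hAY : A ∈ Y := by
      rw [← h.rp]
      exact perp_obj₂ hd1 (neg_shift_mem_rightPerp h.shift (hYrp (h1 hB))) (hYrp hD)
    have hAneg : A⟦(-1:ℤ)⟧ ∈ rightPerp XT :=
      perp_obj₁ hd3 (hDneg hD)
        (neg_shift_mem_rightPerp hTstr.shift (neg_shift_mem_rightPerp hTstr.shift (hYTrp hB)))
    have hAH : A ∈ heart XT YT ∩ Y := by
      refine ⟨⟨hA, ⟨A⟦(-1:ℤ)⟧, ?_, ⟨((shiftFunctorCompIsoId C (-1) 1 (by norm_num)).app A).symm⟩⟩⟩, hAY⟩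
      rw [← hTstr.rp]; exact hAneg
    exact ExtClosure.ext u v w hdist (.of (Or.inr hAH)) (.of (Or.inl hB))
  have goal1 : Y = extClosure (YT ∪ (heart XT YT ∩ Y)) := by
    apply Set.Subset.antisymm key
    have hsub : extClosure (YT ∪ (heart XT YT ∩ Y)) ⊆ rightPerp X := by
      apply extClosure_subset_rightPerp
      rintro V (hV | hV)
      · exact hYrp (h1 hV)
      · exact hYrp hV.2
    rw [h.rp] at hsub; exact hsub
  have hXlp : ∀ {E : C}, E ∈ X → E ∈ leftPerp Y := fun {E} hE => by
    rw [← h.lp] at hE; exact hE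
  have hshift1 : ∀ {A₁ : C}, A₁ ∈ XT → A₁⟦(1:ℤ)⟧ ∈ leftPerp Y := by
    intro A₁ hA₁ V hV f
    obtain ⟨V₀, hV₀, ⟨e⟩⟩ := h2 hV
    exact hom_shift_zero (fun k => hYTrp hV₀ A₁ hA₁ k) e f
  have goal3sup : extClosure (T ∪ shiftSet XT 1) ⊆ leftPerp Y := by
    apply extClosure_subset_leftPerp
    rintro W (hW | hW)
    · intro V hV f
      have hsub : extClosure (YT ∪ (heart XT YT ∩ Y)) ⊆ rightPerp T := by
        apply extClosure_subset_rightPerp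
        rintro V' (hV' | hV')
        · exact fun A₁ hA₁ g => hYTrp hV' A₁ ((htp.subT hA₁).1) g
        · rw [← htp.rp] at hV'; exact hV'.2
      exact hsub (key V hV) W hW f
    · obtain ⟨A₁, hA₁, ⟨e⟩⟩ := hW
      exact leftPerp_iso' e.symm (hshift1 hA₁)
  have goal3sub : ∀ E ∈ X, E ∈ extClosure (T ∪ shiftSet XT 1) := by
    intro E hE
    obtain ⟨A₀, B₀, a, b, c, hA₀, hB₀, hdist⟩ := hTstr.dec (E⟦(-1:ℤ)⟧)
    have hd1 := rot_of_distTriang _ hdist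
    have hd2 := rot_of_distTriang _ hd1
    have hd3 := rot_of_distTriang _ hd2
    have eE : (E⟦(-1:ℤ)⟧)⟦(1:ℤ)⟧ ≅ E := (shiftFunctorCompIsoId C (-1) 1 (by norm_num)).app E
    have hE' : (E⟦(-1:ℤ)⟧)⟦(1:ℤ)⟧ ∈ leftPerp Y := leftPerp_iso' eE.symm (hXlp hE)
    have hA1 : A₀⟦(1:ℤ)⟧ ∈ XT := hTstr.shift ⟨A₀, hA₀, ⟨Iso.refl _⟩⟩
    have hA2 : (A₀⟦(1:ℤ)⟧)⟦(1:ℤ)⟧ ∈ XT := hTstr.shift ⟨A₀⟦(1:ℤ)⟧, hA1, ⟨Iso.refl _⟩⟩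
    have hBT : B₀⟦(1:ℤ)⟧ ∈ T := by
      rw [← htp.lp]
      refine ⟨⟨?_, ⟨B₀, hB₀, ⟨Iso.refl _⟩⟩⟩, ?_⟩
      · rw [← hTstr.lp]
        refine lperp_obj₃ hd3 (fun V hV f => hE' V (h1 hV) f) ?_
        exact fun V hV f => hYTrp hV _ hA2 f
      · refine lperp_obj₃ hd3 (fun V hV f => hE' V hV.2 f) ?_
        intro V hV f
        obtain ⟨V₀, hV₀, ⟨e⟩⟩ := h2 hV.2
        exact hom_shift_zero (fun k => hYTrp hV₀ _ hA1 k) e f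
    exact ExtClosure.iso eE
      (ExtClosure.ext _ _ _ hd3 (.of (Or.inr ⟨A₀, hA₀, ⟨Iso.refl _⟩⟩)) (.of (Or.inl hBT)))
  refine ⟨goal1, ?_, ?_, ?_⟩
  · rw [hY1, h.lp]; exact h
  · rw [hY1]
    apply Set.Subset.antisymm
    · intro E hE
      rw [h.lp] at hE
      exact goal3sub E hE
    · exact goal3sup
  · rw [hY1]; exact goal1


end Paper
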